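/- Let f: Q₁ → Q₂ be a surjective quandle homomorphism between medial quandles. Then there is a surjective group homomorphism Dis(f): Dis(Q₁) → Dis(Q₂) such that Dis(f)(β_y β_z⁻¹) = β_{f(y)} β_{f(z)}⁻¹ for all y, z ∈ Q₁, and Dis(f)(d) ∘ f = f ∘ d for every d ∈ Dis(Q₁). -/

import Mathlib

open LaurentPolynomial

set_option synthInstance.maxHeartbeats 1000000
set_option maxHeartbeats 1000000

noncomputable section

/-- The ring `Λ = ℤ[t,t⁻¹]` of Laurent polynomials with integer coefficients. -/
abbrev Λ : Type := LaurentPolynomial ℤ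

/-- The variable `t ∈ Λ`. -/
abbrev tL : Λ := T 1

/-- A medial quandle structure on a type `Q`: an idempotent binary operation whose right
translations are bijections, satisfying the medial law. -/
structure MedialQuandleStr (Q : Type*) where
  op : Q → Q → Q
  idem : ∀ x, op x x = x
  bij : ∀ y, Function.Bijective fun x => op x y
  medial : ∀ w x y z, op (op w x) (op y z) = op (op w y) (op x z)

/-- A quandle structure on a type `T`. -/
structure QuandleStr (T : Type*) where
  op : T → T → T
  idem : ∀ x, op x x = x
  bij : ∀ y, Function.Bijective fun x => op x y
  distrib : ∀ x y z, op (op x y) z = op (op x z) (op y z)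

namespace MedialQuandleStr

variable {Q : Type*} (s : MedialQuandleStr Q)

/-- The translation `β_y : x ↦ x ▷ y`, as a permutation of `Q`. -/
def β (y : Q) : Equiv.Perm Q := Equiv.ofBijective _ (s.bij y)

/-- `β(Q)`: the subgroup of permutations generated by the translations. -/
def transGroup : Subgroup (Equiv.Perm Q) := Subgroup.closure (Set.range s.β)

/-- The displacement group `Dis(Q)`, generated by the elementary displacements
`β_y β_z⁻¹`. -/
def Dis : Subgroup (Equiv.Perm Q) :=
  Subgroup.closure {d : Equiv.Perm Q | ∃ y z, d = s.β y * (s.β z)⁻¹}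

/-- The orbit of `q`: the smallest subset of `Q` containing `q` and closed under the
action of `β(Q)`. -/
def orbit (q : Q) : Set Q := {x | ∃ g ∈ s.transGroup, g q = x}

end MedialQuandleStr

section Construction

variable {M : Type*} [AddCommGroup M] [Module Λ M] {I : Type*}

/-- The carrier of the quandle `Q(N,(m_i),(X_i))`: the disjoint union of the quotients
`Q_i = N/X_i`. -/
def QCar (N : Submodule Λ M) (X : I → Submodule Λ ↥N) : Type _ :=
  Σ i : I, ↥N ⧸ X i

/-- The condition `(1-t)·X_i = 0` for all `i`. -/
def annCond (N : Submodule Λ M) (X : I → Submodule Λ ↥N) : Prop :=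
  ∀ i, ∀ x ∈ X i, (1 - tL) • (x : ↥N) = 0

/-- Multiplication by `1-t`, descended from `N/X_j` to `N` (well defined since
`(1-t)·X_j = 0`). -/
def oneSubT (N : Submodule Λ M) {X : I → Submodule Λ ↥N} (h : annCond N X) (j : I) :
    (↥N ⧸ X j) →ₗ[Λ] ↥N :=
  Submodule.liftQ (X j) ((1 - tL) • (LinearMap.id : ↥N →ₗ[Λ] ↥N))
    (fun x hx => by simpa using h j x hx)

/-- The operation of `Q(N,(m_i),(X_i))`: for `x ∈ Q_i` and `y ∈ Q_j`,
`x ▷ y = m_j - m_i + t·x + (1-t)·y + X_i ∈ Q_i`. -/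
def qop (N : Submodule Λ M) (m : I → M) {X : I → Submodule Λ ↥N}
    (hm : ∀ i j, m i - m j ∈ N) (h : annCond N X) :
    QCar N X → QCar N X → QCar N X :=
  fun x y =>
    ⟨x.1, Submodule.Quotient.mk (⟨m y.1 - m x.1, hm y.1 x.1⟩ : ↥N)
        + tL • x.2 + Submodule.Quotient.mk (oneSubT N h y.1 y.2)⟩

end Construction

/-- A surjective quandle homomorphism `f : Q₁ → Q₂` of medial quandles
induces a surjective group homomorphism `Dis(f) : Dis(Q₁) → Dis(Q₂)` with
`Dis(f)(β_y β_z⁻¹) = β_{f y} β_{f z}⁻¹` for all `y, z ∈ Q₁`, and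
`Dis(f)(d) ∘ f = f ∘ d` for every `d ∈ Dis(Q₁)`. -/
theorem stmt7 {Q₁ Q₂ : Type*} (s₁ : MedialQuandleStr Q₁) (s₂ : MedialQuandleStr Q₂)
    (f : Q₁ → Q₂) (hf : Function.Surjective f)
    (hhom : ∀ x y, f (s₁.op x y) = s₂.op (f x) (f y)) :
    ∃ φ : ↥s₁.Dis →* ↥s₂.Dis,
      Function.Surjective φ ∧
      (∀ y z : Q₁,
        (φ ⟨s₁.β y * (s₁.β z)⁻¹, by exact Subgroup.subset_closure ⟨y, z, rfl⟩⟩).val =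
          s₂.β (f y) * (s₂.β (f z))⁻¹) ∧
      (∀ d : ↥s₁.Dis, ∀ x : Q₁, (φ d).val (f x) = f (d.val x)) := by
  classical
  have hβ : ∀ (y x : Q₁), (s₂.β (f y)) (f x) = f ((s₁.β y) x) := by
    intro y x
    simp [MedialQuandleStr.β, Equiv.ofBijective, hhom]
  have hβinv : ∀ (y x : Q₁), (s₂.β (f y))⁻¹ (f x) = f ((s₁.β y)⁻¹ x) := by
    intro y x
    have h1 := hβ y ((s₁.β y)⁻¹ x)
    rw [show ∀ (e : Equiv.Perm Q₁) a, e (e⁻¹ a) = a from fun e a => e.apply_symm_apply a] at h1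
    rw [← h1, show ∀ (e : Equiv.Perm Q₂) a, e⁻¹ (e a) = a from fun e a => e.symm_apply_apply a]
  have uniq : ∀ h h' : Equiv.Perm Q₂, (∀ x, h (f x) = h' (f x)) → h = h' := by
    intro h h' he
    ext y
    obtain ⟨x, rfl⟩ := hf y
    exact he x
  -- intertwining witnesses for elements of Dis Q₁
  have ex : ∀ g ∈ s₁.Dis, ∃ h ∈ s₂.Dis, ∀ x, h (f x) = f (g x) := by
    intro g hg
    induction hg using Subgroup.closure_induction with
    | mem g hg =>
      obtain ⟨y, z, rfl⟩ := hg
      refine ⟨s₂.β (f y) * (s₂.β (f z))⁻¹, Subgroup.subset_closure ⟨f y, f z, rfl⟩, ?_⟩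
      intro x
      simp only [Equiv.Perm.mul_apply, hβinv, hβ]
    | one => exact ⟨1, one_mem _, fun x => rfl⟩
    | mul a b _ _ iha ihb =>
      obtain ⟨h₁, h₁m, h₁i⟩ := iha
      obtain ⟨h₂, h₂m, h₂i⟩ := ihb
      refine ⟨h₁ * h₂, mul_mem h₁m h₂m, fun x => ?_⟩
      simp only [Equiv.Perm.mul_apply, h₂i, h₁i]
    | inv a _ iha =>
      obtain ⟨h₁, h₁m, h₁i⟩ := iha
      refine ⟨h₁⁻¹, inv_mem h₁m, fun x => ?_⟩
      have := h₁i (a⁻¹ x)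
      rw [show ∀ (e : Equiv.Perm Q₁) a, e (e⁻¹ a) = a from fun e a => e.apply_symm_apply a] at this
      rw [← this, show ∀ (e : Equiv.Perm Q₂) a, e⁻¹ (e a) = a from fun e a => e.symm_apply_apply a]
  choose h hmem hint using fun (g : ↥s₁.Dis) => ex g.val g.2
  refine ⟨{ toFun := fun g => ⟨h g, hmem g⟩
            map_one' := ?_
            map_mul' := ?_ }, ?_, ?_, ?_⟩
  · ext1
    exact uniq _ 1 (fun x => by simpa using hint 1 x)
  · intro a b
    ext1
    refine uniq _ (h a * h b) (fun x => ?_)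
    show h (a * b) (f x) = h a (h b (f x))
    rw [hint, hint, hint]
    rfl
  · rintro ⟨k, hk⟩
    have ex2 : ∃ g ∈ s₁.Dis, ∀ x, k (f x) = f (g x) := by
      induction hk using Subgroup.closure_induction with
      | mem k hk =>
        obtain ⟨y', z', rfl⟩ := hk
        obtain ⟨y, rfl⟩ := hf y'
        obtain ⟨z, rfl⟩ := hf z'
        refine ⟨s₁.β y * (s₁.β z)⁻¹, Subgroup.subset_closure ⟨y, z, rfl⟩, fun x => ?_⟩
        simp only [Equiv.Perm.mul_apply, hβinv, hβ]
      | one => exact ⟨1, one_mem _, fun x => rfl⟩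
      | mul a b _ _ iha ihb =>
        obtain ⟨g₁, g₁m, g₁i⟩ := iha
        obtain ⟨g₂, g₂m, g₂i⟩ := ihb
        refine ⟨g₁ * g₂, mul_mem g₁m g₂m, fun x => ?_⟩
        simp only [Equiv.Perm.mul_apply, g₂i, g₁i]
      | inv a _ iha =>
        obtain ⟨g₁, g₁m, g₁i⟩ := iha
        refine ⟨g₁⁻¹, inv_mem g₁m, fun x => ?_⟩
        have := g₁i (g₁⁻¹ x)
        rw [show ∀ (e : Equiv.Perm Q₁) a, e (e⁻¹ a) = a from fun e a => e.apply_symm_apply a] at this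
        rw [← this, show ∀ (e : Equiv.Perm Q₂) a, e⁻¹ (e a) = a from fun e a => e.symm_apply_apply a]
    obtain ⟨g, gm, gi⟩ := ex2
    refine ⟨⟨g, gm⟩, ?_⟩
    ext1
    refine uniq _ k (fun x => ?_)
    show h ⟨g, gm⟩ (f x) = k (f x)
    rw [hint ⟨g, gm⟩ x, gi x]
  · intro y z
    refine uniq _ _ (fun x => ?_)
    show h ⟨s₁.β y * (s₁.β z)⁻¹, Subgroup.subset_closure ⟨y, z, rfl⟩⟩ (f x) = _
    rw [hint ⟨s₁.β y * (s₁.β z)⁻¹, Subgroup.subset_closure ⟨y, z, rfl⟩⟩ x]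
    simp only [Equiv.Perm.mul_apply, hβinv, hβ]
  · intro d x
    exact hint d x
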